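/- arXiv:2010.09153 — 2 statements merged into one kernel-verified Lean document; each statement's English description precedes it below -/
import Mathlib

section
/- Let A be an n×n real symmetric positive definite matrix. Let x, ξ, φ : ℝ → ℝⁿ and λ : ℝ → ℝ be curves, each differentiable at t = 0, such that for all t: ⟨A⁻¹x(t), x(t)⟩ = 1, ⟨A⁻¹x(t), ξ(t)⟩ = 0, ‖ξ(t)‖ = 1, ‖φ(t)‖ = 1 and L(x(t), ξ(t)) φ(t) = λ(t) φ(t), and assume ⟨φ(0), ξ(0)⟩ = 0. Then the first variation of the eigenvalue is λ'(0) = −2 ( ⟨ξ'(0), φ(0)⟩ · ⟨(A − x(0) x(0)ᵀ) φ(0), ξ(0)⟩ + ⟨x'(0), φ(0)⟩ · ⟨x(0), φ(0)⟩ ). -/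
open Matrix

/-- The orthogonal projection onto the hyperplane orthogonal to a unit vector `ξ`:
`P_ξ = I - ξ ξᵀ`. -/
noncomputable def projPerp {n : ℕ} (ξ : Fin n → ℝ) : Matrix (Fin n) (Fin n) ℝ :=
  1 - vecMulVec ξ ξ

/-- Moser's Lax matrix `L(x, ξ) = P_ξ (A - x xᵀ) P_ξ`. -/
noncomputable def moserLax {n : ℕ} (A : Matrix (Fin n) (Fin n) ℝ) (x ξ : Fin n → ℝ) :
    Matrix (Fin n) (Fin n) ℝ :=
  projPerp ξ * (A - vecMulVec x x) * projPerp ξ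

lemma hasDerivAt_dot {n : ℕ} {u v : ℝ → Fin n → ℝ} {ud vd : Fin n → ℝ} {t : ℝ}
    (hu : HasDerivAt u ud t) (hv : HasDerivAt v vd t) :
    HasDerivAt (fun s => u s ⬝ᵥ v s) (ud ⬝ᵥ v t + u t ⬝ᵥ vd) t := by
  simp only [dotProduct, ← Finset.sum_add_distrib]
  exact HasDerivAt.fun_sum fun i _ =>
    ((hasDerivAt_pi.1 hu i).mul (hasDerivAt_pi.1 hv i))

lemma hasDerivAt_mulVec' {n : ℕ} (A : Matrix (Fin n) (Fin n) ℝ) {u : ℝ → Fin n → ℝ}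
    {ud : Fin n → ℝ} {t : ℝ} (hu : HasDerivAt u ud t) :
    HasDerivAt (fun s => A.mulVec (u s)) (A.mulVec ud) t := by
  rw [hasDerivAt_pi]
  intro i
  simp only [Matrix.mulVec, dotProduct]
  exact HasDerivAt.fun_sum fun j _ => (hasDerivAt_pi.1 hu j).const_mul (A i j)

lemma vecMulVec_mulVec' {n : ℕ} (u v w : Fin n → ℝ) :
    (vecMulVec u v).mulVec w = (v ⬝ᵥ w) • u := by
  ext i
  simp [Matrix.mulVec, vecMulVec_apply, dotProduct, Finset.mul_sum, mul_comm, mul_left_comm,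
    Pi.smul_apply, smul_eq_mul]

lemma projPerp_mulVec {n : ℕ} (ξ v : Fin n → ℝ) :
    (projPerp ξ).mulVec v = v - (ξ ⬝ᵥ v) • ξ := by
  simp [projPerp, Matrix.sub_mulVec, Matrix.one_mulVec, vecMulVec_mulVec']

lemma moserLax_mulVec {n : ℕ} (A : Matrix (Fin n) (Fin n) ℝ) (x ξ v : Fin n → ℝ) :
    (moserLax A x ξ).mulVec v =
      (projPerp ξ).mulVec ((A - vecMulVec x x).mulVec ((projPerp ξ).mulVec v)) := by
  simp [moserLax, Matrix.mulVec_mulVec, Matrix.mul_assoc]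

/-- First variation of an eigenvalue of Moser's Lax matrix along a curve
`(x(t), ξ(t))` in `S*E_A` with unit eigenvector branch `φ(t)`, `φ(0) ⊥ ξ(0)`:
`λ'(0) = -2 (⟨ξ'(0), φ(0)⟩⟨(A - x(0)x(0)ᵀ)φ(0), ξ(0)⟩ + ⟨x'(0), φ(0)⟩⟨x(0), φ(0)⟩)`. -/
theorem stmt5 {n : ℕ} (A : Matrix (Fin n) (Fin n) ℝ) (hA : A.PosDef)
    (x ξ φ : ℝ → (Fin n → ℝ)) (lam : ℝ → ℝ)
    (xd ξd : Fin n → ℝ) (lamd : ℝ)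
    (hx : HasDerivAt x xd 0) (hξ : HasDerivAt ξ ξd 0)
    (hφ : DifferentiableAt ℝ φ 0) (hlam : HasDerivAt lam lamd 0)
    (h1 : ∀ t, A⁻¹.mulVec (x t) ⬝ᵥ x t = 1)
    (h2 : ∀ t, A⁻¹.mulVec (x t) ⬝ᵥ ξ t = 0)
    (h3 : ∀ t, ξ t ⬝ᵥ ξ t = 1)
    (h4 : ∀ t, φ t ⬝ᵥ φ t = 1)
    (h5 : ∀ t, (moserLax A (x t) (ξ t)).mulVec (φ t) = lam t • φ t)
    (h6 : φ 0 ⬝ᵥ ξ 0 = 0) :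
    lamd = -2 * ((ξd ⬝ᵥ φ 0) * ((A - vecMulVec (x 0) (x 0)).mulVec (φ 0) ⬝ᵥ ξ 0)
      + (xd ⬝ᵥ φ 0) * (x 0 ⬝ᵥ φ 0)) := by
  set φd := deriv φ 0 with hφd
  have hφ' : HasDerivAt φ φd 0 := hφ.hasDerivAt
  -- the auxiliary curve g = P_ξ φ
  set g : ℝ → Fin n → ℝ := fun t => φ t - (ξ t ⬝ᵥ φ t) • ξ t with hg
  have hξφ0 : ξ 0 ⬝ᵥ φ 0 = 0 := by rw [dotProduct_comm]; exact h6
  have hg0 : g 0 = φ 0 := by simp [hg, hξφ0]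
  -- symmetry of A
  have hAt : Aᵀ = A := by
    have h := hA.1.eq
    ext i j
    have := congrFun (congrFun h i) j
    simpa [Matrix.conjTranspose_apply] using this
  have hAsymm : ∀ u v : Fin n → ℝ, u ⬝ᵥ A.mulVec v = v ⬝ᵥ A.mulVec u := by
    intro u v
    rw [Matrix.dotProduct_mulVec, ← Matrix.mulVec_transpose, hAt, dotProduct_comm]
  -- key identity: lam t = g⬝Ag - (x⬝g)^2
  have key : ∀ t, lam t = g t ⬝ᵥ A.mulVec (g t) - (x t ⬝ᵥ g t) ^ 2 := by
    intro t
    have e1 : lam t = φ t ⬝ᵥ (moserLax A (x t) (ξ t)).mulVec (φ t) := by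
      rw [h5 t, dotProduct_smul, smul_eq_mul, h4 t, mul_one]
    rw [e1, moserLax_mulVec, projPerp_mulVec, projPerp_mulVec]
    have : φ t - (ξ t ⬝ᵥ φ t) • ξ t = g t := rfl
    rw [this]
    set w := (A - vecMulVec (x t) (x t)).mulVec (g t) with hw
    have e2 : φ t ⬝ᵥ (w - (ξ t ⬝ᵥ w) • ξ t) = g t ⬝ᵥ w := by
      simp only [hg, dotProduct_sub, sub_dotProduct, dotProduct_smul, smul_dotProduct,
        smul_eq_mul]
      rw [dotProduct_comm (φ t) (ξ t)]
      ring
    rw [e2, hw, Matrix.sub_mulVec, dotProduct_sub, vecMulVec_mulVec', dotProduct_smul,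
      smul_eq_mul, dotProduct_comm (g t) (x t)]
    ring
  -- derivative of g at 0
  set c : ℝ := ξd ⬝ᵥ φ 0 + ξ 0 ⬝ᵥ φd with hc
  have hgd : HasDerivAt g (φd - c • ξ 0) 0 := by
    have h1' := (hasDerivAt_dot hξ hφ').fun_smul hξ
    have h2' := hφ'.fun_sub h1'
    rw [hξφ0] at h2'
    simpa [hg, hc] using h2'
  set gd : Fin n → ℝ := φd - c • ξ 0 with hgdd
  -- derivative of RHS
  have hF : HasDerivAt (fun t => g t ⬝ᵥ A.mulVec (g t) - (x t ⬝ᵥ g t) ^ 2)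
      ((gd ⬝ᵥ A.mulVec (g 0) + g 0 ⬝ᵥ A.mulVec gd)
        - 2 * (x 0 ⬝ᵥ g 0) * (xd ⬝ᵥ g 0 + x 0 ⬝ᵥ gd)) 0 := by
    have hAg := hasDerivAt_mulVec' A hgd
    have d1 : HasDerivAt (fun t => g t ⬝ᵥ A.mulVec (g t))
        (gd ⬝ᵥ A.mulVec (g 0) + g 0 ⬝ᵥ A.mulVec gd) 0 := hasDerivAt_dot hgd hAg
    have d2 : HasDerivAt (fun t => (x t ⬝ᵥ g t) ^ 2)
        (2 * (x 0 ⬝ᵥ g 0) * (xd ⬝ᵥ g 0 + x 0 ⬝ᵥ gd)) 0 := by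
      have := (hasDerivAt_dot hx hgd).fun_pow 2
      simpa [mul_comm, mul_assoc, mul_left_comm] using this
    exact d1.sub d2
  -- lam and F agree everywhere, so derivatives agree
  have hlam' : HasDerivAt lam
      ((gd ⬝ᵥ A.mulVec (g 0) + g 0 ⬝ᵥ A.mulVec gd)
        - 2 * (x 0 ⬝ᵥ g 0) * (xd ⬝ᵥ g 0 + x 0 ⬝ᵥ gd)) 0 := by
    have : lam = fun t => g t ⬝ᵥ A.mulVec (g t) - (x t ⬝ᵥ g t) ^ 2 := funext key
    rw [this]; exact hF
  have heq := hlam.unique hlam'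
  -- eigen-equation at 0: A φ0 = lam 0 • φ0 + μ • ξ0 + (x0⬝φ0) • x0
  set μ : ℝ := ξ 0 ⬝ᵥ ((A - vecMulVec (x 0) (x 0)).mulVec (φ 0)) with hμ
  have heig : A.mulVec (φ 0) = lam 0 • φ 0 + μ • ξ 0 + (x 0 ⬝ᵥ φ 0) • x 0 := by
    have := h5 0
    rw [moserLax_mulVec, projPerp_mulVec, projPerp_mulVec] at this
    have hp : φ 0 - (ξ 0 ⬝ᵥ φ 0) • ξ 0 = φ 0 := by simp [hξφ0]
    rw [hp] at this
    -- M φ0 - μ ξ0 = lam 0 • φ0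
    have hM : (A - vecMulVec (x 0) (x 0)).mulVec (φ 0) = lam 0 • φ 0 + μ • ξ 0 := by
      rw [← hμ] at this
      exact sub_eq_iff_eq_add.mp this
    have hM2 : A.mulVec (φ 0) = (A - vecMulVec (x 0) (x 0)).mulVec (φ 0)
        + (x 0 ⬝ᵥ φ 0) • x 0 := by
      rw [Matrix.sub_mulVec, vecMulVec_mulVec']
      abel
    rw [hM2, hM]
  -- scalar computations
  have hφdφ : φd ⬝ᵥ φ 0 = 0 := by
    have hd : HasDerivAt (fun t => φ t ⬝ᵥ φ t) (φd ⬝ᵥ φ 0 + φ 0 ⬝ᵥ φd) 0 :=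
      hasDerivAt_dot hφ' hφ'
    have hconst : HasDerivAt (fun _ : ℝ => (1 : ℝ)) 0 0 := hasDerivAt_const 0 1
    have : (fun t => φ t ⬝ᵥ φ t) = fun _ : ℝ => (1 : ℝ) := funext h4
    rw [this] at hd
    have h0 := hconst.unique hd
    rw [dotProduct_comm (φ 0) φd] at h0
    linarith
  rw [heq, hg0]
  have e1 : gd ⬝ᵥ A.mulVec (φ 0)
      = -μ * (ξd ⬝ᵥ φ 0) + (x 0 ⬝ᵥ φ 0) * ((x 0 ⬝ᵥ φd) - c * (x 0 ⬝ᵥ ξ 0)) := by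
    rw [heig, hgdd]
    simp only [sub_dotProduct, smul_dotProduct, dotProduct_add, dotProduct_smul, smul_eq_mul]
    rw [hφdφ]
    rw [dotProduct_comm φd (ξ 0), dotProduct_comm φd (x 0), dotProduct_comm (ξ 0) (x 0),
      hξφ0, h3 0, hc]
    ring
  have e2 : φ 0 ⬝ᵥ A.mulVec gd = gd ⬝ᵥ A.mulVec (φ 0) := (hAsymm _ _).symm
  have e3 : x 0 ⬝ᵥ gd = x 0 ⬝ᵥ φd - c * (x 0 ⬝ᵥ ξ 0) := by
    rw [hgdd, dotProduct_sub, dotProduct_smul, smul_eq_mul]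
  have e4 : (A - vecMulVec (x 0) (x 0)).mulVec (φ 0) ⬝ᵥ ξ 0 = μ := dotProduct_comm _ _
  rw [e2, e1, e3, e4]
  ring
end

section
/- Let A be an n×n real symmetric matrix, let z ∈ ℝ be a nonzero number that is not an eigenvalue of A, let x ∈ ℝⁿ, and let ξ ∈ ℝⁿ be a unit vector. Then z is an eigenvalue of L(x, ξ) if and only if Q_z(x, ξ)² = Q_z(ξ) (1 + Q_z(x)), where Q_z(u, v) = ⟨(z I − A)⁻¹ u, v⟩ and Q_z(u) = Q_z(u, u); equivalently, if and only if the quadratic equation expressing tangency of the line {x + tξ : t ∈ ℝ} to the confocal quadric {y : ⟨(A − z I)⁻¹ y, y⟩ = −1} has vanishing discriminant. -/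
open Matrix

/-- The confocal quadratic form `Q_z(u, v) = ⟨(zI - A)⁻¹ u, v⟩`. -/
noncomputable def confocalQ {n : ℕ} (A : Matrix (Fin n) (Fin n) ℝ) (z : ℝ)
    (u v : Fin n → ℝ) : ℝ :=
  (z • (1 : Matrix (Fin n) (Fin n) ℝ) - A)⁻¹.mulVec u ⬝ᵥ v

lemma vmv_mul {n : ℕ} (u v : Fin n → ℝ) (N : Matrix (Fin n) (Fin n) ℝ) :
    vecMulVec u v * N = vecMulVec u (v ᵥ* N) := by
  ext i j
  simp [mul_apply, vecMulVec_apply, vecMul, dotProduct, Finset.mul_sum, mul_assoc]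

lemma mul_vmv {n : ℕ} (N : Matrix (Fin n) (Fin n) ℝ) (u v : Fin n → ℝ) :
    N * vecMulVec u v = vecMulVec (N *ᵥ u) v := by
  ext i j
  simp only [mul_apply, vecMulVec_apply, mulVec, dotProduct, Finset.sum_mul]
  congr 1; ext k; ring

lemma vmv_mul_vmv {n : ℕ} (u v w t : Fin n → ℝ) :
    vecMulVec u v * vecMulVec w t = (v ⬝ᵥ w) • vecMulVec u t := by
  rw [vmv_mul]
  ext i j
  simp only [vecMulVec_apply, vecMul, dotProduct, Matrix.smul_apply, smul_eq_mul, Finset.sum_mul,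
    Finset.mul_sum]
  congr 1; ext k; ring

lemma vmv_sub_smul {n : ℕ} (u v w : Fin n → ℝ) (s : ℝ) :
    vecMulVec u (v - s • w) = vecMulVec u v - s • vecMulVec u w := by
  ext i j
  simp [vecMulVec_apply]
  ring

/-- For `z ≠ 0` not an eigenvalue of the symmetric matrix `A`, `z` is an eigenvalue
of `L(x, ξ)` if and only if `Q_z(x, ξ)² = Q_z(ξ)(1 + Q_z(x))`, the tangency
condition of the line through `x` with direction `ξ` to the confocal quadric. -/
theorem stmt10 {n : ℕ} (A : Matrix (Fin n) (Fin n) ℝ) (hA : Aᵀ = A)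
    (z : ℝ) (hz0 : z ≠ 0) (hz : z ∉ spectrum ℝ A)
    (x ξ : Fin n → ℝ) (hξ : ξ ⬝ᵥ ξ = 1) :
    z ∈ spectrum ℝ (moserLax A x ξ) ↔
      (confocalQ A z x ξ) ^ 2 = confocalQ A z ξ ξ * (1 + confocalQ A z x x) := by
  classical
  set M : Matrix (Fin n) (Fin n) ℝ := z • (1 : Matrix (Fin n) (Fin n) ℝ) - A with hMdef
  have hMT : Mᵀ = M := by
    simp [hMdef, transpose_sub, transpose_smul, hA]
  have hMunit : IsUnit M := by
    have h := spectrum.notMem_iff.mp hz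
    rwa [Algebra.algebraMap_eq_smul_one] at h
  have hdetM : IsUnit M.det := (isUnit_iff_isUnit_det M).mp hMunit
  set R : Matrix (Fin n) (Fin n) ℝ := M⁻¹ with hRdef
  have hMR : M * R = 1 := mul_nonsing_inv M hdetM
  have hRM : R * M = 1 := nonsing_inv_mul M hdetM
  have hRT : Rᵀ = R := by rw [hRdef, transpose_nonsing_inv, hMT]
  -- symmetry of R in dot products
  have hsym : ∀ u v : Fin n → ℝ, u ⬝ᵥ (R *ᵥ v) = (R *ᵥ u) ⬝ᵥ v := by
    intro u v
    rw [dotProduct_mulVec, ← mulVec_transpose, hRT]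
  have hRMv : ∀ u : Fin n → ℝ, R *ᵥ (M *ᵥ u) = u := by
    intro u
    rw [mulVec_mulVec, hRM, one_mulVec]
  -- main scalars
  set w : Fin n → ℝ := (A - vecMulVec x x) *ᵥ ξ with hwdef
  set s : ℝ := ξ ⬝ᵥ w with hsdef
  set t : ℝ := x ⬝ᵥ ξ with htdef
  set a : ℝ := ξ ⬝ᵥ (R *ᵥ ξ) with hadef
  set b : ℝ := ξ ⬝ᵥ (R *ᵥ x) with hbdef
  set c : ℝ := x ⬝ᵥ (R *ᵥ x) with hcdef
  have hb' : x ⬝ᵥ (R *ᵥ ξ) = b := by rw [hsym, dotProduct_comm, hbdef]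
  -- w as a combination
  have hw : w = z • ξ - M *ᵥ ξ - t • x := by
    rw [hwdef, sub_mulVec]
    have h1 : A *ᵥ ξ = z • ξ - M *ᵥ ξ := by
      rw [hMdef, sub_mulVec, smul_mulVec, one_mulVec]
      abel
    have h2 : vecMulVec x x *ᵥ ξ = t • x := by
      ext i
      simp only [vecMulVec_apply, mulVec, dotProduct, Pi.smul_apply, smul_eq_mul, htdef,
        Finset.sum_mul]
      congr 1; ext k; ring
    rw [h1, h2]
  have hρw : R *ᵥ w = z • (R *ᵥ ξ) - ξ - t • (R *ᵥ x) := by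
    rw [hw, mulVec_sub, mulVec_sub, mulVec_smul, mulVec_smul, hRMv]
  -- dot product values
  have h5 : ξ ⬝ᵥ (R *ᵥ w) = z * a - 1 - t * b := by
    rw [hρw]
    simp [dotProduct_sub, dotProduct_smul, hξ, hadef, hbdef, smul_eq_mul]
  have h6 : x ⬝ᵥ (R *ᵥ w) = z * b - t - t * c := by
    rw [hρw]
    simp [dotProduct_sub, dotProduct_smul, hb', htdef, hcdef, smul_eq_mul]
  have h7 : w ⬝ᵥ (R *ᵥ ξ) = z * a - 1 - t * b := by
    rw [dotProduct_comm, ← hsym, h5]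
  have h8 : w ⬝ᵥ (R *ᵥ x) = z * b - t - t * c := by
    rw [dotProduct_comm, ← hsym, h6]
  have h9 : w ⬝ᵥ (R *ᵥ w) = z * (z * a - 1 - t * b) - s - t * (z * b - t - t * c) := by
    rw [hρw, dotProduct_sub, dotProduct_sub, dotProduct_smul, dotProduct_smul, h7, h8,
      dotProduct_comm w ξ, ← hsdef]
    simp only [smul_eq_mul]
    try ring
  -- factorization z•1 - L = M + U * V
  set U : Matrix (Fin n) (Fin 3) ℝ := Matrix.of fun i k => ![ξ, w, x] k i with hUdef
  set V : Matrix (Fin 3) (Fin n) ℝ := Matrix.of fun k j => ![w - s • ξ, ξ, x] k j with hVdef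
  have hUV : U * V = vecMulVec ξ (w - s • ξ) + vecMulVec w ξ + vecMulVec x x := by
    ext i j
    simp [hUdef, hVdef, mul_apply, Fin.sum_univ_three, vecMulVec_apply]
  have hBsymm : (A - vecMulVec x x)ᵀ = A - vecMulVec x x := by
    rw [transpose_sub, hA]
    ext i j
    simp [vecMulVec_apply, transpose_apply, mul_comm]
  have heB : vecMulVec ξ ξ * (A - vecMulVec x x) = vecMulVec ξ w := by
    rw [vmv_mul]
    rw [← hBsymm, vecMul_transpose]
  have hBe : (A - vecMulVec x x) * vecMulVec ξ ξ = vecMulVec w ξ := by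
    rw [mul_vmv, ← hwdef]
  have hfac : z • (1 : Matrix (Fin n) (Fin n) ℝ) - moserLax A x ξ = M + U * V := by
    rw [hUV, moserLax, projPerp]
    have e1 : (1 - vecMulVec ξ ξ) * (A - vecMulVec x x) =
        (A - vecMulVec x x) - vecMulVec ξ w := by
      rw [sub_mul, one_mul, heB]
    have e2 : vecMulVec ξ w * vecMulVec ξ ξ = s • vecMulVec ξ ξ := by
      rw [vmv_mul_vmv, dotProduct_comm, ← hsdef]
    rw [e1, sub_mul, mul_sub, mul_one, hBe, mul_sub, mul_one, e2, vmv_sub_smul, hMdef]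
    generalize s • vecMulVec ξ ξ = K
    abel
  -- determinant factorization
  have hstep : M + U * V = M * (1 + R * U * V) := by
    rw [mul_add, mul_one, ← Matrix.mul_assoc, ← Matrix.mul_assoc, hMR, Matrix.one_mul]
  have hdetfac : (z • (1 : Matrix (Fin n) (Fin n) ℝ) - moserLax A x ξ).det
      = M.det * (1 + V * (R * U)).det := by
    rw [hfac, hstep, det_mul]
    congr 1
    exact det_one_add_mul_comm (R * U) V
  -- the 3×3 matrix entries
  have hVRU : ∀ k l, (V * (R * U)) k l = (![w - s • ξ, ξ, x] k) ⬝ᵥ (R *ᵥ (![ξ, w, x] l)) := by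
    intro k l
    simp only [mul_apply, mulVec, dotProduct, hUdef, hVdef, Matrix.of_apply]
  have e00 : (V * (R * U)) 0 0 = (z * a - 1 - t * b) - s * a := by
    rw [hVRU]
    show (w - s • ξ) ⬝ᵥ (R *ᵥ ξ) = _
    rw [sub_dotProduct, smul_dotProduct, h7, ← hadef, smul_eq_mul]
  have e01 : (V * (R * U)) 0 1 = (z * (z * a - 1 - t * b) - s - t * (z * b - t - t * c))
      - s * (z * a - 1 - t * b) := by
    rw [hVRU]
    show (w - s • ξ) ⬝ᵥ (R *ᵥ w) = _
    rw [sub_dotProduct, smul_dotProduct, h9, h5, smul_eq_mul]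
  have e02 : (V * (R * U)) 0 2 = (z * b - t - t * c) - s * b := by
    rw [hVRU]
    show (w - s • ξ) ⬝ᵥ (R *ᵥ x) = _
    rw [sub_dotProduct, smul_dotProduct, h8, ← hbdef, smul_eq_mul]
  have e10 : (V * (R * U)) 1 0 = a := by
    rw [hVRU]
    show ξ ⬝ᵥ (R *ᵥ ξ) = a
    rw [← hadef]
  have e11 : (V * (R * U)) 1 1 = z * a - 1 - t * b := by
    rw [hVRU]
    exact h5
  have e12 : (V * (R * U)) 1 2 = b := by
    rw [hVRU]
    show ξ ⬝ᵥ (R *ᵥ x) = b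
    rw [← hbdef]
  have e20 : (V * (R * U)) 2 0 = b := by
    rw [hVRU]
    exact hb'
  have e21 : (V * (R * U)) 2 1 = z * b - t - t * c := by
    rw [hVRU]
    exact h6
  have e22 : (V * (R * U)) 2 2 = c := by
    rw [hVRU]
    show x ⬝ᵥ (R *ᵥ x) = c
    rw [← hcdef]
  have one00 : (1 : Matrix (Fin 3) (Fin 3) ℝ) 0 0 = 1 := one_apply_eq 0
  have one11 : (1 : Matrix (Fin 3) (Fin 3) ℝ) 1 1 = 1 := one_apply_eq 1
  have one22 : (1 : Matrix (Fin 3) (Fin 3) ℝ) 2 2 = 1 := one_apply_eq 2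
  have one01 : (1 : Matrix (Fin 3) (Fin 3) ℝ) 0 1 = 0 := one_apply_ne (by decide)
  have one02 : (1 : Matrix (Fin 3) (Fin 3) ℝ) 0 2 = 0 := one_apply_ne (by decide)
  have one10 : (1 : Matrix (Fin 3) (Fin 3) ℝ) 1 0 = 0 := one_apply_ne (by decide)
  have one12 : (1 : Matrix (Fin 3) (Fin 3) ℝ) 1 2 = 0 := one_apply_ne (by decide)
  have one20 : (1 : Matrix (Fin 3) (Fin 3) ℝ) 2 0 = 0 := one_apply_ne (by decide)
  have one21 : (1 : Matrix (Fin 3) (Fin 3) ℝ) 2 1 = 0 := one_apply_ne (by decide)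
  have hdet3 : (1 + V * (R * U)).det = z * (a * (1 + c) - b ^ 2) := by
    rw [det_fin_three]
    simp only [Matrix.add_apply, e00, e01, e02, e10, e11, e12, e20, e21, e22,
      one00, one01, one02, one10, one11, one12, one20, one21, one22]
    ring
  have key : (z • (1 : Matrix (Fin n) (Fin n) ℝ) - moserLax A x ξ).det
      = M.det * (z * (a * (1 + c) - b ^ 2)) := by
    rw [hdetfac, hdet3]
  -- spectrum characterization
  have hmem : z ∈ spectrum ℝ (moserLax A x ξ) ↔
      (z • (1 : Matrix (Fin n) (Fin n) ℝ) - moserLax A x ξ).det = 0 := by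
    rw [spectrum.mem_iff, Algebra.algebraMap_eq_smul_one, Matrix.isUnit_iff_isUnit_det,
      isUnit_iff_ne_zero, not_not]
  -- identify the confocal quantities
  have hQxξ : confocalQ A z x ξ = b := by
    rw [confocalQ, ← hMdef, ← hRdef, hbdef, dotProduct_comm]
  have hQξξ : confocalQ A z ξ ξ = a := by
    rw [confocalQ, ← hMdef, ← hRdef, hadef, dotProduct_comm]
  have hQxx : confocalQ A z x x = c := by
    rw [confocalQ, ← hMdef, ← hRdef, hcdef, dotProduct_comm]
  rw [hmem, key, hQxξ, hQξξ, hQxx]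
  rw [mul_eq_zero, mul_eq_zero]
  constructor
  · rintro (h | h | h)
    · exact absurd h hdetM.ne_zero
    · exact absurd h hz0
    · exact (sub_eq_zero.mp h).symm
  · intro h
    right
    right
    rw [sub_eq_zero]
    exact h.symm
end
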